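/- Let k, p⁺, p⁻ ∈ ℝ with k < 0 and 0 < p⁺ < −k/2, let N ∈ ℕ, and let r ∈ ℤ with r ≥ −N. Then −2p⁺(p⁻ + 1/2)/k + (p⁺ + r − p⁻)²/(2(1 − k)) + N > 0. -/

import Mathlib

/-- Positivity of the coset Virasoro weight
`h^c = −2p⁺(p⁻ + 1/2)/k + (p⁺ + r − p⁻)²/(2(1 − k)) + N` for `k < 0`,
`0 < p⁺ < −k/2`, `N ∈ ℕ`, and `r ∈ ℤ` with `r ≥ −N`. -/
theorem coset_weight_pos (k pp pm : ℝ) (hk : k < 0) (hpp₀ : 0 < pp)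
    (hpp₁ : pp < -k / 2) (N : ℕ) (r : ℤ) (hr : (r : ℝ) ≥ -(N : ℝ)) :
    -2 * pp * (pm + 1 / 2) / k + (pp + (r : ℝ) - pm) ^ 2 / (2 * (1 - k)) + (N : ℝ) > 0 := by
  have hk' : (0:ℝ) < -k := by linarith
  have h1k : (0:ℝ) < 1 - k := by linarith
  have hN : (0:ℝ) ≤ (N:ℝ) := Nat.cast_nonneg N
  have hD : (0:ℝ) < 2*(-k)*(1-k) := by positivity
  have key : 4*pp*(pm+1/2)*(1-k) + (-k)*(pp + (r:ℝ) - pm)^2 + 2*(N:ℝ)*(-k)*(1-k) > 0 := by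
    nlinarith [sq_nonneg (k*(pp + (r:ℝ) - pm) + 2*pp*(1-k)), mul_pos hpp₀ (by linarith : 0 < -2*pp - k), mul_nonneg hN (mul_nonneg hk'.le (by linarith : (0:ℝ) ≤ -2*pp - k)), mul_nonneg (mul_nonneg hN hk'.le) hpp₀.le, mul_pos hk' h1k, mul_nonneg (mul_nonneg hk'.le hpp₀.le) (by linarith : (0:ℝ) ≤ (r:ℝ) + N)]
  have e1 : -2 * pp * (pm + 1 / 2) / k = 4*pp*(pm+1/2)*(1-k) / (2*(-k)*(1-k)) := by
    rw [div_eq_div_iff hk.ne hD.ne']; ring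
  have e2 : (pp + (r : ℝ) - pm) ^ 2 / (2 * (1 - k)) = (-k)*(pp + (r:ℝ) - pm)^2 / (2*(-k)*(1-k)) := by
    rw [div_eq_div_iff (by positivity) hD.ne']; ring
  have e3 : (N:ℝ) = 2*(N:ℝ)*(-k)*(1-k) / (2*(-k)*(1-k)) := by
    rw [eq_div_iff hD.ne']; ring
  rw [e1, e2, e3, ← add_div, ← add_div]
  exact div_pos key hD
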